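/- Fix z ∈ [0,1]. For every reference point ỹ ∈ (0,1) and every y ∈ [0,1], the first-order (tangent-line) expansion of G₊ at ỹ is a valid upper bound: G₊(y, z) ≤ G₊(ỹ, z) + G₊′(ỹ, z)·(y − ỹ). (Linearized upper Cauchy–Schwarz constraint.) -/

import Mathlib

noncomputable def gPlus (y z : ℝ) : ℝ :=
  y + (1 - z) * (1 - 2 * y) + 2 * Real.sqrt (z * (1 - z) * y * (1 - y))

noncomputable def gPlus' (y z : ℝ) : ℝ :=
  -1 + 2 * z + (1 - 2 * y) * Real.sqrt (z * (1 - z) / (y * (1 - y)))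

noncomputable def GPlus (y z : ℝ) : ℝ :=
  if y < z then gPlus y z else 1

noncomputable def GPlus' (y z : ℝ) : ℝ :=
  if y < z then gPlus' y z else 0

lemma gPlus_le_one (z : ℝ) (hz : z ∈ Set.Icc (0 : ℝ) 1)
    (y : ℝ) (hy : y ∈ Set.Icc (0 : ℝ) 1) : gPlus y z ≤ 1 := by
  obtain ⟨hz0, hz1⟩ := hz
  obtain ⟨hy0, hy1⟩ := hy
  unfold gPlus
  have hp : (0:ℝ) ≤ z * (1 - y) := by nlinarith
  have hq : (0:ℝ) ≤ y * (1 - z) := by nlinarith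
  have hrw : Real.sqrt (z * (1 - z) * y * (1 - y))
      = Real.sqrt (z * (1 - y)) * Real.sqrt (y * (1 - z)) := by
    rw [← Real.sqrt_mul hp]
    ring_nf
  rw [hrw]
  have h1 : Real.sqrt (z * (1 - y)) * Real.sqrt (z * (1 - y)) = z * (1 - y) :=
    Real.mul_self_sqrt hp
  have h2 : Real.sqrt (y * (1 - z)) * Real.sqrt (y * (1 - z)) = y * (1 - z) :=
    Real.mul_self_sqrt hq
  nlinarith [sq_nonneg (Real.sqrt (z * (1 - y)) - Real.sqrt (y * (1 - z)))]

lemma gPlus_tangent (z : ℝ) (hz : z ∈ Set.Icc (0 : ℝ) 1)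
    (yt : ℝ) (hyt : yt ∈ Set.Ioo (0 : ℝ) 1)
    (y : ℝ) (hy : y ∈ Set.Icc (0 : ℝ) 1) :
    gPlus y z ≤ gPlus yt z + gPlus' yt z * (y - yt) := by
  obtain ⟨hz0, hz1⟩ := hz
  obtain ⟨hyt0, hyt1⟩ := hyt
  obtain ⟨hy0, hy1⟩ := hy
  have hc : (0:ℝ) ≤ z * (1 - z) := by nlinarith
  have hu : (0:ℝ) ≤ y * (1 - y) := by nlinarith
  have hut : (0:ℝ) < yt * (1 - yt) := by nlinarith
  set a := Real.sqrt (z * (1 - z)) with ha_def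
  set b := Real.sqrt (y * (1 - y)) with hb_def
  set bt := Real.sqrt (yt * (1 - yt)) with hbt_def
  have ha0 : 0 ≤ a := Real.sqrt_nonneg _
  have hb0 : 0 ≤ b := Real.sqrt_nonneg _
  have hbt0 : 0 < bt := Real.sqrt_pos.mpr hut
  have hbb : b * b = y * (1 - y) := Real.mul_self_sqrt hu
  have hbtbt : bt * bt = yt * (1 - yt) := Real.mul_self_sqrt hut.le
  have hrw1 : Real.sqrt (z * (1 - z) * y * (1 - y)) = a * b := by
    rw [ha_def, hb_def, ← Real.sqrt_mul hc]
    ring_nf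
  have hrw2 : Real.sqrt (z * (1 - z) / (yt * (1 - yt))) = a / bt := by
    rw [ha_def, hbt_def, ← Real.sqrt_div hc]
  unfold gPlus gPlus'
  rw [hrw1, hrw2]
  have hrw3 : Real.sqrt (z * (1 - z) * yt * (1 - yt)) = a * bt := by
    rw [ha_def, hbt_def, ← Real.sqrt_mul hc]
    ring_nf
  rw [hrw3]
  have key : 2 * (a * b) ≤ 2 * (a * bt) + (1 - 2 * yt) * (a / bt) * (y - yt) := by
    rw [← mul_le_mul_iff_right₀ hbt0]
    have hdc : bt * ((1 - 2 * yt) * (a / bt) * (y - yt))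
        = (1 - 2 * yt) * a * (y - yt) := by
      field_simp
    rw [mul_add, hdc]
    nlinarith [mul_nonneg ha0 (sq_nonneg (b - bt)), mul_nonneg ha0 (sq_nonneg (y - yt))]
  nlinarith [key]

theorem linearized_upper_cs (z : ℝ) (hz : z ∈ Set.Icc (0 : ℝ) 1)
    (yt : ℝ) (hyt : yt ∈ Set.Ioo (0 : ℝ) 1)
    (y : ℝ) (hy : y ∈ Set.Icc (0 : ℝ) 1) :
    GPlus y z ≤ GPlus yt z + GPlus' yt z * (y - yt) := by
  unfold GPlus GPlus'
  by_cases hytz : yt < z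
  · simp only [if_pos hytz]
    by_cases hyz : y < z
    · simp only [if_pos hyz]
      exact gPlus_tangent z hz yt hyt y hy
    · simp only [if_neg hyz]
      push_neg at hyz
      -- 1 ≤ tangent line at yt evaluated at y ≥ z
      have hzIcc : z ∈ Set.Icc (0:ℝ) 1 := hz
      have hzmem : z ∈ Set.Icc (0:ℝ) 1 := hz
      have htangZ : gPlus z z ≤ gPlus yt z + gPlus' yt z * (z - yt) :=
        gPlus_tangent z hz yt hyt z hzmem
      have hgzz : gPlus z z = 1 := by
        unfold gPlus
        have : z * (1 - z) * z * (1 - z) = (z * (1 - z)) ^ 2 := by ring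
        rw [this, Real.sqrt_sq (by nlinarith [hz.1, hz.2, hyt.1, hyt.2] : (0:ℝ) ≤ z * (1 - z))]
        ring
      rw [hgzz] at htangZ
      have hB : gPlus yt z ≤ 1 :=
        gPlus_le_one z hz yt ⟨hyt.1.le, hyt.2.le⟩
      have hzyt : 0 < z - yt := by linarith
      have hs : 0 ≤ gPlus' yt z := by
        by_contra hneg
        push_neg at hneg
        nlinarith
      nlinarith [mul_le_mul_of_nonneg_left (by linarith : z - yt ≤ y - yt) hs]
  · simp only [if_neg hytz]
    by_cases hyz : y < z
    · simp only [if_pos hyz]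
      have := gPlus_le_one z hz y hy
      linarith
    · simp only [if_neg hyz]
      linarith
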